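/- Let R be a commutative ring with unity, k ≥ 2 an integer, a_1,…,a_k ∈ R with (a_1)+⋯+(a_k) = R, and E a finite set of maximal ideals of R. Then there exists a in the ideal (a_2,…,a_k) such that a_1 + a ∉ M for all M ∈ E. -/

import Mathlib

/-- Let `R` be a commutative ring with unity, `k ≥ 2`, `a_1, …, a_k ∈ R` with
`(a_1) + ⋯ + (a_k) = R`, and `E` a finite set of maximal ideals of `R`. Then there exists
`a` in the ideal `(a_2, …, a_k)` such that `a_1 + a ∉ M` for all `M ∈ E`. -/
theorem unital_lemma {R : Type*} [CommRing R] (k : ℕ) (hk : 2 ≤ k) (a : Fin k → R)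
    (ha : ∑ i, Ideal.span {a i} = ⊤)
    (E : Finset (Ideal R)) (hE : ∀ M ∈ E, M.IsMaximal) :
    ∃ b ∈ Ideal.span (a '' {i | (i : ℕ) ≠ 0}), ∀ M ∈ E, a ⟨0, by omega⟩ + b ∉ M := by
  classical
  set a0 : R := a ⟨0, by omega⟩ with ha0
  set I : Ideal R := Ideal.span (a '' {i | (i : ℕ) ≠ 0}) with hI
  have htop : Ideal.span {a0} ⊔ I = ⊤ := by
    rw [eq_top_iff, ← ha]
    refine Finset.sum_induction _ (· ≤ Ideal.span {a0} ⊔ I)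
      (fun x y hx hy => sup_le hx hy) bot_le ?_
    intro i _
    by_cases hi : (i : ℕ) = 0
    · have : i = ⟨0, by omega⟩ := Fin.ext hi
      rw [this]
      exact le_sup_left
    · refine le_trans ?_ le_sup_right
      rw [hI, Ideal.span_le]
      intro x hx
      rw [Set.mem_singleton_iff] at hx
      exact Ideal.subset_span ⟨i, hi, hx.symm⟩
  -- split E
  set E1 := E.filter (fun M => a0 ∉ M) with hE1
  set E2 := E.filter (fun M => a0 ∈ M) with hE2
  set J : Ideal R := I * ∏ M ∈ E1, M with hJ
  -- J is not contained in any M ∈ E2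
  have hnot : ∀ M ∈ E2, ¬ J ≤ M := by
    intro M hM hle
    rw [hE2, Finset.mem_filter] at hM
    obtain ⟨hME, ha0M⟩ := hM
    have hMmax := hE M hME
    have hMprime : M.IsPrime := hMmax.isPrime
    rw [hJ, hMprime.mul_le] at hle
    rcases hle with hIM | hPM
    · have : Ideal.span {a0} ⊔ I ≤ M :=
        sup_le ((Ideal.span_singleton_le_iff_mem M).2 ha0M) hIM
      rw [htop] at this
      exact hMmax.ne_top (top_le_iff.mp this)
    · rw [hMprime.prod_le] at hPM
      obtain ⟨N, hNE1, hNM⟩ := hPM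
      rw [hE1, Finset.mem_filter] at hNE1
      have hNmax := hE N hNE1.1
      have : N = M := hNmax.eq_of_le hMmax.ne_top hNM
      exact hNE1.2 (this ▸ ha0M)
  -- prime avoidance
  have havoid : ¬ ((J : Set R) ⊆ ⋃ M ∈ (↑E2 : Set (Ideal R)), (M : Set R)) := by
    rw [Ideal.subset_union_prime ⊥ ⊥ (fun M hM _ _ => ((hE M (Finset.mem_filter.mp hM).1).isPrime))]
    push_neg
    exact hnot
  obtain ⟨b, hbJ, hbM⟩ := Set.not_subset.mp havoid
  simp only [Set.mem_iUnion, not_exists] at hbM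
  refine ⟨b, ?_, ?_⟩
  · exact Ideal.mul_le_left hbJ
  · intro M hME hmem
    by_cases hM : a0 ∈ M
    · have hM2 : M ∈ E2 := Finset.mem_filter.mpr ⟨hME, hM⟩
      have hbM' : b ∉ M := hbM M (Finset.mem_coe.mpr hM2)
      exact hbM' ((Ideal.add_mem_iff_right M hM).mp hmem)
    · have hM1 : M ∈ E1 := Finset.mem_filter.mpr ⟨hME, hM⟩
      have hbM1 : b ∈ M := by
        have : J ≤ M := hJ ▸ (Ideal.mul_le_right.trans (Ideal.prod_le_inf.trans (Finset.inf_le hM1)))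
        exact this hbJ
      exact hM ((Ideal.add_mem_iff_left M hbM1).mp hmem)
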